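/- Let $u, v : [0,T] \to \mathbb{R}^3$ be continuous with $u(t) \ne v(t)$ for all $t \in [T-\delta, T]$ for some $\delta \in (0,T)$, and suppose the first coordinates satisfy $v_1(t) - u_1(t) \ge C_3 > 0$ and $|u(t)-v(t)|^{-1} \ge C_4 > 0$ on $[T-\delta,T]$. For $\epsilon > 0$ define $u^\epsilon(t) = u(t) - \epsilon^2 e_1$ and $v^\epsilon(t) = v(t) + \epsilon^2 e_1$ for $t \in [T-\delta,T]$. Then there exists $C_5 > 0$ such that for all sufficiently small $\epsilon > 0$ and all $t \in [T-\delta,T]$, $|v^\epsilon(t) - u^\epsilon(t)|^{-1} - |v(t)-u(t)|^{-1} \le -C_5\epsilon^2$. -/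

import Mathlib

open Set

lemma aux9 (M C3 ε a b : ℝ) (hM : 0 < M) (hC3 : 0 < C3) (hε : 0 < ε)
    (ha : 0 < a) (hab : a ≤ b) (hbM : b ≤ M)
    (hsq : a ^ 2 + 4 * ε ^ 2 * C3 ≤ b ^ 2) :
    b⁻¹ - a⁻¹ ≤ -(2 * C3 / M ^ 3) * ε ^ 2 := by
  have hb : 0 < b := lt_of_lt_of_le ha hab
  have haM : a ≤ M := hab.trans hbM
  set K := 2 * C3 / M ^ 3 with hKdef
  have hK : K * M ^ 3 = 2 * C3 := by rw [hKdef, div_mul_cancel₀ _ (by positivity)]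
  have hKpos : 0 < K := by positivity
  rw [inv_sub_inv hb.ne' ha.ne', div_le_iff₀ (by positivity)]
  have h2 : 4 * ε ^ 2 * C3 ≤ (b - a) * (2 * M) := by nlinarith
  nlinarith [mul_le_mul_of_nonneg_left (mul_le_mul hbM haM ha.le hM.le)
      (by positivity : (0:ℝ) ≤ K * ε ^ 2)]

lemma aux9norm (w : EuclideanSpace ℝ (Fin 3)) (c : ℝ) :
    ‖w + c • (EuclideanSpace.single 0 1 : EuclideanSpace ℝ (Fin 3))‖ ^ 2
      = ‖w‖ ^ 2 + 2 * (c * w 0) + c ^ 2 := by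
  rw [@norm_add_sq_real, real_inner_smul_right, EuclideanSpace.inner_single_right,
    norm_smul, EuclideanSpace.norm_single]
  simp [mul_pow]

/-- Potential-energy decrease: pushing two separated bodies apart by `ε²` along the
first coordinate direction decreases the reciprocal distance by at least `C₅ ε²`. -/
theorem stmt9 (T δ C3 C4 : ℝ) (hδ : δ ∈ Ioo (0:ℝ) T) (hC3 : 0 < C3) (hC4 : 0 < C4)
    (u v : ℝ → EuclideanSpace ℝ (Fin 3))
    (hucont : ContinuousOn u (Icc (T - δ) T)) (hvcont : ContinuousOn v (Icc (T - δ) T))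
    (hne : ∀ t ∈ Icc (T - δ) T, u t ≠ v t)
    (hsep : ∀ t ∈ Icc (T - δ) T, C3 ≤ v t 0 - u t 0)
    (hinv : ∀ t ∈ Icc (T - δ) T, C4 ≤ ‖u t - v t‖⁻¹) :
    ∃ C5 > 0, ∃ ε0 > 0, ∀ ε ∈ Ioo (0:ℝ) ε0, ∀ t ∈ Icc (T - δ) T,
      ‖(v t + ε ^ 2 • (EuclideanSpace.single 0 1 : EuclideanSpace ℝ (Fin 3)))
        - (u t - ε ^ 2 • (EuclideanSpace.single 0 1 : EuclideanSpace ℝ (Fin 3)))‖⁻¹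
        - ‖v t - u t‖⁻¹ ≤ -C5 * ε ^ 2 := by
  set M := C4⁻¹ + 2 with hMdef
  have hMpos : 0 < M := by positivity
  refine ⟨2 * C3 / M ^ 3, by positivity, 1, one_pos, ?_⟩
  intro ε hε t ht
  set e : EuclideanSpace ℝ (Fin 3) := EuclideanSpace.single 0 1 with he
  set w : EuclideanSpace ℝ (Fin 3) := v t - u t with hw
  have hw0 : C3 ≤ w 0 := by
    have := hsep t ht
    simpa [hw] using this
  have hwne : w ≠ 0 := sub_ne_zero.2 (Ne.symm (hne t ht))
  have ha : 0 < ‖w‖ := norm_pos_iff.2 hwne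
  have hεpos : 0 < ε := hε.1
  have haM : ‖w‖ ≤ C4⁻¹ := by
    have h := hinv t ht
    rw [norm_sub_rev, ← hw] at h
    rw [← inv_inv ‖w‖]
    exact inv_anti₀ hC4 h
  set c : ℝ := 2 * ε ^ 2 with hc
  have hexpr : (v t + ε ^ 2 • e) - (u t - ε ^ 2 • e) = w + c • e := by
    rw [hw, hc]; module
  rw [hexpr]
  set b := ‖w + c • e‖ with hb
  have hbsq : b ^ 2 = ‖w‖ ^ 2 + 2 * (c * w 0) + c ^ 2 := aux9norm w c
  have hsq : ‖w‖ ^ 2 + 4 * ε ^ 2 * C3 ≤ b ^ 2 := by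
    have h1 : c * C3 ≤ c * w 0 := by
      apply mul_le_mul_of_nonneg_left hw0 (by positivity)
    nlinarith [sq_nonneg c]
  have hab : ‖w‖ ≤ b := by
    have hb0 : 0 ≤ b := norm_nonneg _
    nlinarith [sq_nonneg ε]
  have hbM : b ≤ M := by
    have h1 : b ≤ ‖w‖ + ‖c • e‖ := norm_add_le _ _
    have h2 : ‖c • e‖ = c := by
      rw [norm_smul, he, EuclideanSpace.norm_single]
      simp [hc, abs_of_nonneg, sq_nonneg ε]
    have h3 : c ≤ 2 := by
      have : ε ≤ 1 := hε.2.le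
      nlinarith
    rw [hMdef]; linarith
  exact aux9 M C3 ε ‖w‖ b hMpos hC3 hεpos ha hab hbM hsq
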